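/- Let Q_1, …, Q_N be d×d Hermitian unitary complex matrices such that every pair Q_i, Q_j either commutes or anticommutes, p_1, …, p_N ∈ [0, 1], ρ a density matrix, and O a d×d complex matrix with ‖O‖ ≤ 1. Let μ ⊆ {1, …, N} and suppose Q_i O Q_i = O for every i ∉ μ. For g ∈ ℝ define f(g) = Tr(ρ · (N_N^{(g)} ∘ ⋯ ∘ N_1^{(g)})(O)) with N_i^{(g)}(A) = (1 − g p_i) A + g p_i Q_i A Q_i. Let K ≥ 0 with K + 1 ≤ N, let g_0, …, g_K be pairwise distinct positive reals, and let β_ℓ = ∏_{m ≠ ℓ} g_m / (g_m − g_ℓ). Then |∑_{ℓ=0}^{K} β_ℓ f(g_ℓ) − Tr(ρ O)| ≤ ∑_{k=K+1}^{N} 2^k · |∑_{ℓ=0}^{K} β_ℓ g_ℓ^k| · e_k(p̃_1, …, p̃_N), where p̃_i = p_i if i ∈ μ and p̃_i = 0 otherwise, and e_k denotes the elementary symmetric polynomial of degree k. -/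

import Mathlib

open Matrix
open scoped Matrix.Norms.L2Operator ComplexOrder

namespace ZneAux

open Finset

set_option maxHeartbeats 1000000 in
/-- For a density matrix `ρ`, `|Tr(ρ A)| ≤ ‖A‖` in the L2 operator norm. -/
lemma trace_bound {d : ℕ} (ρ A : Matrix (Fin d) (Fin d) ℂ)
    (hρ : ρ.PosSemidef) (hρtr : ρ.trace = 1) :
    ‖(ρ * A).trace‖ ≤ ‖A‖ := by
  classical
  obtain ⟨s, hss, hsh⟩ : ∃ s : Matrix (Fin d) (Fin d) ℂ, s * s = ρ ∧ sᴴ = s := by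
    open scoped MatrixOrder in
    obtain ⟨X, hX, -, hXX⟩ := CFC.exists_sqrt_of_isSelfAdjoint_of_quasispectrumRestricts
      hρ.isHermitian (QuasispectrumRestricts.nnreal_of_nonneg hρ.nonneg)
    exact ⟨X, hXX, hX.star_eq⟩
  set u : Fin d → EuclideanSpace ℂ (Fin d) := fun i => WithLp.toLp 2 (fun j => star (s i j)) with hu
  have hstar : ∀ i k, s k i = star (s i k) := by
    intro i k; conv_lhs => rw [← hsh, Matrix.conjTranspose_apply]
  have key : ∀ i, (s * A * s) i i
      = inner ℂ (u i) ((EuclideanSpace.equiv (Fin d) ℂ).symm (A *ᵥ (u i).ofLp)) := by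
    intro i
    have : ((EuclideanSpace.equiv (Fin d) ℂ).symm (A *ᵥ (u i).ofLp)).ofLp
        = (A *ᵥ (u i).ofLp : Fin d → ℂ) := rfl
    simp only [PiLp.inner_apply, RCLike.inner_apply, this]
    simp only [Matrix.mul_apply, Matrix.mulVec, dotProduct, hu]
    simp only [starRingEnd_apply, star_star, Finset.mul_sum, Finset.sum_mul]
    rw [Finset.sum_comm]
    refine Finset.sum_congr rfl fun j _ => Finset.sum_congr rfl fun k _ => ?_
    rw [hstar i k]; ring
  have hnorm : ∀ i, ((‖u i‖ : ℂ))^2 = ρ i i := by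
    intro i
    have hi : (inner ℂ (u i) (u i) : ℂ) = ρ i i := by
      simp only [PiLp.inner_apply, RCLike.inner_apply, hu, starRingEnd_apply, star_star]
      rw [← hss]
      simp only [Matrix.mul_apply]
      refine Finset.sum_congr rfl fun j _ => ?_
      rw [hstar i j, mul_comm]
    rw [← hi]; exact (inner_self_eq_norm_sq_to_K (𝕜 := ℂ) (u i)).symm
  have htr : (ρ * A).trace = (s * A * s).trace := by
    rw [← hss, trace_mul_cycle s A s, Matrix.mul_assoc]
  have step1 : ‖(s * A * s).trace‖ ≤ ∑ i, ‖(s * A * s) i i‖ :=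
    norm_sum_le _ _
  have step2 : ∀ i : Fin d, ‖(s * A * s) i i‖ ≤ ‖A‖ * ‖u i‖^2 := by
    intro i
    rw [key i]
    have h1 : ‖(inner ℂ (u i) ((EuclideanSpace.equiv (Fin d) ℂ).symm (A *ᵥ (u i).ofLp)) : ℂ)‖
        ≤ ‖u i‖ * ‖(EuclideanSpace.equiv (Fin d) ℂ).symm (A *ᵥ (u i).ofLp)‖ :=
      norm_inner_le_norm (𝕜 := ℂ) _ _
    have h2 : ‖(EuclideanSpace.equiv (Fin d) ℂ).symm (A *ᵥ (u i).ofLp)‖ ≤ ‖A‖ * ‖u i‖ :=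
      A.l2_opNorm_mulVec (u i)
    calc ‖(inner ℂ (u i) ((EuclideanSpace.equiv (Fin d) ℂ).symm (A *ᵥ (u i).ofLp)) : ℂ)‖
        ≤ ‖u i‖ * (‖A‖ * ‖u i‖) :=
          h1.trans (mul_le_mul_of_nonneg_left h2 (norm_nonneg _))
      _ = ‖A‖ * ‖u i‖^2 := by ring
  have hsum : (∑ i, ‖u i‖^2 : ℝ) = 1 := by
    have h1 : ∑ i, (‖u i‖:ℂ)^2 = 1 := by
      rw [← hρtr, Matrix.trace]
      exact Finset.sum_congr rfl fun i _ => hnorm i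
    have h2 : ((∑ i, ‖u i‖^2 : ℝ) : ℂ) = 1 := by push_cast; exact h1
    exact_mod_cast h2
  calc ‖(ρ * A).trace‖ = ‖(s * A * s).trace‖ := by rw [htr]
    _ ≤ ∑ i, ‖(s * A * s) i i‖ := step1
    _ ≤ ∑ i, ‖A‖ * ‖u i‖^2 := Finset.sum_le_sum fun i _ => step2 i
    _ = ‖A‖ * ∑ i, ‖u i‖^2 := by rw [Finset.mul_sum]
    _ = ‖A‖ := by rw [hsum, mul_one]

variable {d N : ℕ}

/-- One noise channel step. -/
noncomputable def step (Q : Fin N → Matrix (Fin d) (Fin d) ℂ) (q : Fin N → ℝ) (x : ℝ)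
    (A : Matrix (Fin d) (Fin d) ℂ) (i : Fin N) : Matrix (Fin d) (Fin d) ℂ :=
  (1 - (x * q i : ℝ)) • A + ((x * q i : ℝ) : ℂ) • (Q i * A * Q i)

/-- Shift of a coefficient sequence. -/
def pre (M : ℕ → Matrix (Fin d) (Fin d) ℂ) : ℕ → Matrix (Fin d) (Fin d) ℂ
  | 0 => 0
  | (k+1) => M k

/-- Coefficient-level version of one channel step. -/
noncomputable def stepC (Q : Fin N → Matrix (Fin d) (Fin d) ℂ) (q : Fin N → ℝ)
    (M : ℕ → Matrix (Fin d) (Fin d) ℂ) (i : Fin N) (k : ℕ) : Matrix (Fin d) (Fin d) ℂ :=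
  M k + ((q i : ℂ)) • (Q i * pre M k * Q i - pre M k)

/-- Coefficients of the polynomial (in the gain) given by the composite channel. -/
noncomputable def coeffs (Q : Fin N → Matrix (Fin d) (Fin d) ℂ) (q : Fin N → ℝ)
    (O : Matrix (Fin d) (Fin d) ℂ) (L : List (Fin N)) : ℕ → Matrix (Fin d) (Fin d) ℂ :=
  L.foldl (stepC Q q) (fun k => if k = 0 then O else 0)

lemma coeffs_concat (Q : Fin N → Matrix (Fin d) (Fin d) ℂ) (q : Fin N → ℝ)
    (O : Matrix (Fin d) (Fin d) ℂ) (L : List (Fin N)) (i : Fin N) :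
    coeffs Q q O (L ++ [i]) = stepC Q q (coeffs Q q O L) i := by
  simp [coeffs, List.foldl_append]

lemma coeffs_zero (Q : Fin N → Matrix (Fin d) (Fin d) ℂ) (q : Fin N → ℝ)
    (O : Matrix (Fin d) (Fin d) ℂ) (L : List (Fin N)) :
    coeffs Q q O L 0 = O := by
  induction L using List.reverseRecOn with
  | nil => simp [coeffs]
  | append_singleton L i ih =>
      rw [coeffs_concat]
      simp [stepC, pre, ih]

lemma coeffs_support (Q : Fin N → Matrix (Fin d) (Fin d) ℂ) (q : Fin N → ℝ)
    (O : Matrix (Fin d) (Fin d) ℂ) (L : List (Fin N)) :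
    ∀ k, L.length < k → coeffs Q q O L k = 0 := by
  induction L using List.reverseRecOn with
  | nil => intro k hk; simp [coeffs]; omega
  | append_singleton L i ih =>
      intro k hk
      rw [coeffs_concat]
      simp only [List.length_append, List.length_singleton] at hk
      match k, hk with
      | (k+1), hk =>
        have h1 : coeffs Q q O L (k+1) = 0 := ih _ (by omega)
        have h2 : coeffs Q q O L k = 0 := ih _ (by omega)
        simp [stepC, pre, h1, h2]

lemma real_smul_mat (r : ℝ) (A : Matrix (Fin d) (Fin d) ℂ) :
    r • A = ((r : ℂ)) • A := by
  rw [← smul_one_smul ℂ r A, Complex.real_smul, mul_one]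

lemma foldl_step_eq (Q : Fin N → Matrix (Fin d) (Fin d) ℂ) (q : Fin N → ℝ)
    (O : Matrix (Fin d) (Fin d) ℂ) (L : List (Fin N)) (x : ℝ) :
    L.foldl (step Q q x) O
      = ∑ k ∈ Finset.range (L.length + 1), ((x:ℂ))^k • coeffs Q q O L k := by
  induction L using List.reverseRecOn with
  | nil => simp [coeffs]
  | append_singleton L i ih =>
      rw [List.foldl_append, List.foldl_cons, List.foldl_nil, ih]
      set n := L.length with hn
      set c := coeffs Q q O L with hc
      have hlen : (L ++ [i]).length = n + 1 := by simp [hn]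
      rw [hlen, coeffs_concat]
      -- expand RHS
      have hrhs : ∑ k ∈ Finset.range (n + 1 + 1), ((x:ℂ))^k • stepC Q q c i k
          = (∑ k ∈ Finset.range (n + 1 + 1), ((x:ℂ))^k • c k)
            + ∑ k ∈ Finset.range (n + 1 + 1),
                ((x:ℂ))^k • (((q i : ℂ)) • (Q i * pre c k * Q i - pre c k)) := by
        rw [← Finset.sum_add_distrib]
        refine Finset.sum_congr rfl fun k _ => ?_
        rw [stepC, smul_add]
      have hz : c (n+1) = 0 := coeffs_support Q q O L (n+1) (by omega)
      have h1 : ∑ k ∈ Finset.range (n + 1 + 1), ((x:ℂ))^k • c k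
          = ∑ k ∈ Finset.range (n + 1), ((x:ℂ))^k • c k := by
        rw [Finset.sum_range_succ, hz]
        simp
      have h2 : ∑ k ∈ Finset.range (n + 1 + 1),
            ((x:ℂ))^k • (((q i : ℂ)) • (Q i * pre c k * Q i - pre c k))
          = ∑ k ∈ Finset.range (n + 1),
              ((x:ℂ))^(k+1) • (((q i : ℂ)) • (Q i * c k * Q i - c k)) := by
        rw [Finset.sum_range_succ']
        simp [pre]
      rw [hrhs, h1, h2]
      -- now expand LHS
      rw [step]
      have hQS : Q i * (∑ k ∈ Finset.range (n + 1), ((x:ℂ))^k • c k) * Q i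
          = ∑ k ∈ Finset.range (n + 1), ((x:ℂ))^k • (Q i * c k * Q i) := by
        rw [Finset.mul_sum, Finset.sum_mul]
        refine Finset.sum_congr rfl fun k _ => ?_
        rw [mul_smul_comm, smul_mul_assoc]
      rw [real_smul_mat, hQS]
      push_cast
      set S := ∑ k ∈ Finset.range (n + 1), ((x:ℂ))^k • c k with hS
      set T := ∑ k ∈ Finset.range (n + 1), ((x:ℂ))^k • (Q i * c k * Q i) with hT
      set a : ℂ := (x:ℂ) * ((q i : ℂ)) with ha
      calc (1 - a) • S + a • T = S + (a • T - a • S) := by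
            rw [sub_smul, one_smul]; abel
        _ = S + ∑ k ∈ Finset.range (n + 1),
              ((x:ℂ))^(k+1) • (((q i : ℂ)) • (Q i * c k * Q i - c k)) := by
            congr 1
            rw [hS, hT, Finset.smul_sum, Finset.smul_sum, ← Finset.sum_sub_distrib]
            refine Finset.sum_congr rfl fun k _ => ?_
            rw [smul_smul, smul_smul, ← smul_sub, smul_smul]
            congr 1
            rw [ha]; ring

lemma esymm_insert (q : Fin N → ℝ) {s : Finset (Fin N)} {i : Fin N} (hi : i ∉ s) (k : ℕ) :
    ∑ S ∈ (insert i s).powersetCard (k+1), ∏ j ∈ S, q j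
      = (∑ S ∈ s.powersetCard (k+1), ∏ j ∈ S, q j)
        + q i * ∑ S ∈ s.powersetCard k, ∏ j ∈ S, q j := by
  classical
  have hdis : Disjoint (s.powersetCard (k+1)) ((s.powersetCard k).image (insert i)) := by
    rw [Finset.disjoint_left]
    intro A hA hA'
    obtain ⟨B, hB, rfl⟩ := Finset.mem_image.mp hA'
    have hsub : insert i B ⊆ s := (Finset.mem_powersetCard.mp hA).1
    exact hi (hsub (Finset.mem_insert_self i B))
  have hinj : Set.InjOn (insert i) (s.powersetCard k : Set (Finset (Fin N)))  := by
    intro A hA B hB h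
    have hiA : i ∉ A := fun hiA =>
      hi ((Finset.mem_powersetCard.mp (by exact_mod_cast hA)).1 hiA)
    have hiB : i ∉ B := fun hiB =>
      hi ((Finset.mem_powersetCard.mp (by exact_mod_cast hB)).1 hiB)
    rw [← Finset.erase_insert hiA, ← Finset.erase_insert hiB, h]
  rw [Finset.powersetCard_succ_insert hi, Finset.sum_union hdis]
  congr 1
  rw [Finset.sum_image hinj, Finset.mul_sum]
  refine Finset.sum_congr rfl fun S hS => ?_
  have hiS : i ∉ S := fun h => hi ((Finset.mem_powersetCard.mp hS).1 h)
  rw [Finset.prod_insert hiS]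

lemma coeffs_norm (Q : Fin N → Matrix (Fin d) (Fin d) ℂ) (q : Fin N → ℝ)
    (O : Matrix (Fin d) (Fin d) ℂ) (hO : ‖O‖ ≤ 1)
    (hQn : ∀ (i : Fin N) (A : Matrix (Fin d) (Fin d) ℂ), ‖Q i * A * Q i‖ ≤ ‖A‖)
    (hq : ∀ i, 0 ≤ q i) :
    ∀ (L : List (Fin N)), L.Nodup → ∀ k,
      ‖coeffs Q q O L k‖ ≤ 2^k * ∑ S ∈ L.toFinset.powersetCard k, ∏ j ∈ S, q j := by
  intro L
  induction L using List.reverseRecOn with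
  | nil =>
      intro _ k
      match k with
      | 0 => simpa [coeffs] using hO
      | (k+1) =>
          simp only [coeffs, List.foldl_nil, List.toFinset_nil]
          have : (k+1) ≠ 0 := by omega
          rw [if_neg this, norm_zero]
          have : (0:ℝ) ≤ ∑ S ∈ Finset.powersetCard (k+1) (∅ : Finset (Fin N)), ∏ j ∈ S, q j :=
            Finset.sum_nonneg fun S _ => Finset.prod_nonneg fun j _ => hq j
          positivity
  | append_singleton L i ih =>
      intro hnd k
      have hndL : L.Nodup := (List.nodup_append'.mp hnd).1
      have hiL : i ∉ L := by
        have := List.nodup_append'.mp hnd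
        intro hmem
        exact this.2.2 hmem (List.mem_singleton_self i)
      have hiF : i ∉ L.toFinset := by simpa using hiL
      have htf : (L ++ [i]).toFinset = insert i L.toFinset := by
        ext x; simp [or_comm]
      rw [htf, coeffs_concat]
      match k with
      | 0 =>
          rw [stepC]
          simp only [pre, Matrix.mul_zero, Matrix.zero_mul, sub_zero, smul_zero, add_zero]
          simpa [coeffs_zero] using hO
      | (k+1) =>
          rw [stepC]
          have hb1 := ih hndL (k+1)
          have hb0 := ih hndL k
          have hrec := esymm_insert q hiF k
          have hEnn : (0:ℝ) ≤ ∑ S ∈ L.toFinset.powersetCard k, ∏ j ∈ S, q j :=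
            Finset.sum_nonneg fun S _ => Finset.prod_nonneg fun j _ => hq j
          calc ‖coeffs Q q O L (k+1)
                + ((q i : ℂ)) • (Q i * pre (coeffs Q q O L) (k+1) * Q i
                    - pre (coeffs Q q O L) (k+1))‖
              ≤ ‖coeffs Q q O L (k+1)‖
                + ‖((q i : ℂ)) • (Q i * coeffs Q q O L k * Q i - coeffs Q q O L k)‖ := by
                exact norm_add_le _ _
            _ ≤ ‖coeffs Q q O L (k+1)‖
                + q i * (‖Q i * coeffs Q q O L k * Q i‖ + ‖coeffs Q q O L k‖) := by
                gcongr
                rw [norm_smul]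
                have : ‖((q i : ℂ))‖ = q i := by
                  rw [Complex.norm_real, Real.norm_eq_abs, abs_of_nonneg (hq i)]
                rw [this]
                exact mul_le_mul_of_nonneg_left (norm_sub_le _ _) (hq i)
            _ ≤ ‖coeffs Q q O L (k+1)‖ + q i * (2 * ‖coeffs Q q O L k‖) := by
                have h := hQn i (coeffs Q q O L k)
                have := mul_le_mul_of_nonneg_left
                  (show ‖Q i * coeffs Q q O L k * Q i‖ + ‖coeffs Q q O L k‖
                      ≤ 2 * ‖coeffs Q q O L k‖ by linarith) (hq i)
                linarith
            _ ≤ 2^(k+1) * ∑ S ∈ L.toFinset.powersetCard (k+1), ∏ j ∈ S, q j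
                + q i * (2 * (2^k * ∑ S ∈ L.toFinset.powersetCard k, ∏ j ∈ S, q j)) := by
                have := mul_le_mul_of_nonneg_left
                  (show 2 * ‖coeffs Q q O L k‖
                      ≤ 2 * (2^k * ∑ S ∈ L.toFinset.powersetCard k, ∏ j ∈ S, q j) by
                    linarith [hb0]) (hq i)
                linarith
            _ = 2^(k+1) * ((∑ S ∈ L.toFinset.powersetCard (k+1), ∏ j ∈ S, q j)
                + q i * ∑ S ∈ L.toFinset.powersetCard k, ∏ j ∈ S, q j) := by ring
            _ = 2^(k+1) * ∑ S ∈ (insert i L.toFinset).powersetCard (k+1), ∏ j ∈ S, q j := by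
                rw [hrec]

lemma foldl_lightcone (Q : Fin N → Matrix (Fin d) (Fin d) ℂ) (p q : Fin N → ℝ)
    (μ : Finset (Fin N)) (hpq : ∀ i ∈ μ, p i = q i) (hq0 : ∀ i ∉ μ, q i = 0)
    (hswap : ∀ (i j : Fin N) (A : Matrix (Fin d) (Fin d) ℂ),
      Q j * (Q i * A * Q i) * Q j = Q i * (Q j * A * Q j) * Q i)
    (x : ℝ) :
    ∀ (L : List (Fin N)) (A : Matrix (Fin d) (Fin d) ℂ),
      (∀ j ∉ μ, Q j * A * Q j = A) →
      L.foldl (step Q p x) A = L.foldl (step Q q x) A := by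
  intro L
  induction L with
  | nil => intro A _; rfl
  | cons i L ih =>

      intro A hA
      have hstep_inv : ∀ j ∉ μ, Q j * (step Q p x A i) * Q j = step Q p x A i := by
        intro j hj
        rw [step]
        simp only [Matrix.mul_add, Matrix.add_mul, mul_smul_comm, smul_mul_assoc]
        rw [hswap i j A]
        simp only [hA j hj]
      have hstep_eq : step Q p x A i = step Q q x A i := by
        by_cases hi : i ∈ μ
        · rw [step, step, hpq i hi]
        · rw [step, step, hq0 i hi, hA i hi]
          rw [real_smul_mat, real_smul_mat]
          push_cast
          rw [← add_smul, ← add_smul]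
          norm_num
      rw [List.foldl_cons, List.foldl_cons, hstep_eq]
      exact ih _ (hstep_eq ▸ hstep_inv)

lemma richardson {K : ℕ} (g : Fin (K+1) → ℝ) (hg_inj : Function.Injective g)
    (β : Fin (K+1) → ℝ)
    (hβ : ∀ ℓ, β ℓ = ∏ m ∈ Finset.univ.erase ℓ, g m / (g m - g ℓ))
    (k : ℕ) (hk : k ≤ K) :
    ∑ ℓ, β ℓ * g ℓ ^ k = if k = 0 then 1 else 0 := by
  classical
  have hinj : Set.InjOn g (Finset.univ : Finset (Fin (K+1))) := hg_inj.injOn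
  have hdeg : ((Polynomial.X : Polynomial ℝ)^k).degree
      < (Finset.univ : Finset (Fin (K+1))).card := by
    rw [Polynomial.degree_X_pow, Finset.card_univ, Fintype.card_fin]
    exact_mod_cast Nat.lt_succ_of_le hk
  have hinterp := Lagrange.eq_interpolate (v := g) hinj hdeg
  have heval := congrArg (Polynomial.eval (0:ℝ)) hinterp
  rw [Lagrange.interpolate_apply] at heval
  simp only [Polynomial.eval_finset_sum, Polynomial.eval_mul, Polynomial.eval_C,
    Polynomial.eval_pow, Polynomial.eval_X] at heval
  have hbasis : ∀ ℓ, Polynomial.eval 0 (Lagrange.basis Finset.univ g ℓ) = β ℓ := by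
    intro ℓ
    rw [hβ, Lagrange.basis, Polynomial.eval_prod]
    refine Finset.prod_congr rfl fun m hm => ?_
    have hml : m ≠ ℓ := (Finset.mem_erase.mp hm).1
    have hne : g m - g ℓ ≠ 0 := sub_ne_zero.mpr (fun h => hml (hg_inj h))
    have hne' : g ℓ - g m ≠ 0 := sub_ne_zero.mpr (fun h => hml (hg_inj h).symm)
    rw [Lagrange.basisDivisor]
    simp only [Polynomial.eval_mul, Polynomial.eval_C, Polynomial.eval_sub,
      Polynomial.eval_X]
    field_simp
    ring
  have h0 : (0:ℝ)^k = if k = 0 then 1 else 0 := by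
    rcases Nat.eq_zero_or_pos k with h | h
    · simp [h]
    · rw [zero_pow (by omega), if_neg (by omega)]
  rw [h0] at heval
  rw [heval]
  refine Finset.sum_congr rfl fun ℓ _ => ?_
  rw [hbasis ℓ]
  ring

end ZneAux

set_option maxHeartbeats 1000000 in
/-- **Light-cone zero-noise extrapolation error bound.**
Same setting as the standard ZNE bound, with additionally: the `Q i` pairwise
commute or anticommute, `μ ⊆ {1, …, N}`, and `Q i O Q i = O` for every `i ∉ μ`
(noise channels outside the light cone act trivially on `O`).  Then the ZNE
remainder is bounded using only the error probabilities inside the light cone: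
`|∑ ℓ, β ℓ f (g ℓ) − Tr(ρ O)| ≤ ∑_{k=K+1}^{N} 2^k |∑ ℓ, β ℓ (g ℓ)^k| e_k(p̃)`,
where `p̃ i = p i` for `i ∈ μ` and `p̃ i = 0` otherwise. -/
theorem zne_lightcone_error_bound (d N K : ℕ) (hKN : K + 1 ≤ N)
    (Q : Fin N → Matrix (Fin d) (Fin d) ℂ)
    (hQ_herm : ∀ i, (Q i)ᴴ = Q i) (hQ_unit : ∀ i, Q i * Q i = 1)
    (hQ_comm : ∀ i j, Q i * Q j = Q j * Q i ∨ Q i * Q j = -(Q j * Q i))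
    (p : Fin N → ℝ) (hp : ∀ i, p i ∈ Set.Icc (0 : ℝ) 1)
    (ρ O : Matrix (Fin d) (Fin d) ℂ)
    (hρ : ρ.PosSemidef) (hρ_tr : ρ.trace = 1) (hO : ‖O‖ ≤ 1)
    (μ : Finset (Fin N)) (hμ : ∀ i ∉ μ, Q i * O * Q i = O)
    (g : Fin (K + 1) → ℝ) (hg_inj : Function.Injective g) (hg_pos : ∀ ℓ, 0 < g ℓ)
    (β : Fin (K + 1) → ℝ)
    (hβ : ∀ ℓ, β ℓ = ∏ m ∈ Finset.univ.erase ℓ, g m / (g m - g ℓ))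
    (f : ℝ → ℂ)
    (hf : ∀ x : ℝ, f x = (ρ * (List.finRange N).foldl
        (fun A i => (1 - (x * p i : ℝ)) • A + ((x * p i : ℝ) : ℂ) • (Q i * A * Q i)) O).trace)
    (ptilde : Fin N → ℝ) (hptilde : ∀ i, ptilde i = if i ∈ μ then p i else 0) :
    ‖(∑ ℓ, (β ℓ : ℂ) * f (g ℓ)) - (ρ * O).trace‖
      ≤ ∑ k ∈ Finset.Icc (K + 1) N,
          2 ^ k * |∑ ℓ, β ℓ * g ℓ ^ k| *
            ∑ S ∈ Finset.univ.powersetCard k, ∏ i ∈ S, ptilde i := by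
  classical
  -- norm facts
  have hone : ‖(1 : Matrix (Fin d) (Fin d) ℂ)‖ ≤ 1 := by
    have h := Matrix.l2_opNorm_conjTranspose_mul_self (1 : Matrix (Fin d) (Fin d) ℂ)
    rw [Matrix.conjTranspose_one, Matrix.one_mul] at h
    nlinarith [norm_nonneg (1 : Matrix (Fin d) (Fin d) ℂ)]
  have hQ1 : ∀ i, ‖Q i‖ ≤ 1 := by
    intro i
    have h := Matrix.l2_opNorm_conjTranspose_mul_self (Q i)
    rw [hQ_herm i, hQ_unit i] at h
    nlinarith [norm_nonneg (Q i)]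
  have hQn : ∀ (i : Fin N) (A : Matrix (Fin d) (Fin d) ℂ), ‖Q i * A * Q i‖ ≤ ‖A‖ := by
    intro i A
    have h1 : ‖Q i * A‖ ≤ ‖Q i‖ * ‖A‖ := Matrix.l2_opNorm_mul _ _
    have h2 : ‖Q i * A * Q i‖ ≤ ‖Q i * A‖ * ‖Q i‖ := Matrix.l2_opNorm_mul _ _
    nlinarith [hQ1 i, norm_nonneg (Q i * A), norm_nonneg A, norm_nonneg (Q i)]
  -- the swap identity
  have hswap : ∀ (i j : Fin N) (A : Matrix (Fin d) (Fin d) ℂ),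
      Q j * (Q i * A * Q i) * Q j = Q i * (Q j * A * Q j) * Q i := by
    intro i j A
    have h2 : (Q j * Q i) * A * (Q i * Q j) = (Q i * Q j) * A * (Q j * Q i) := by
      rcases hQ_comm i j with h | h
      · rw [h]
      · have h' : Q j * Q i = -(Q i * Q j) := by rw [h, neg_neg]
        rw [h']
        simp only [Matrix.neg_mul, Matrix.mul_neg, neg_neg]
    calc Q j * (Q i * A * Q i) * Q j = (Q j * Q i) * A * (Q i * Q j) := by
          simp only [Matrix.mul_assoc]
      _ = (Q i * Q j) * A * (Q j * Q i) := h2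
      _ = Q i * (Q j * A * Q j) * Q i := by simp only [Matrix.mul_assoc]
  -- lightcone reduction
  have hpq : ∀ i ∈ μ, p i = ptilde i := fun i hi => by rw [hptilde i, if_pos hi]
  have hq0 : ∀ i ∉ μ, ptilde i = 0 := fun i hi => by rw [hptilde i, if_neg hi]
  have hq_nn : ∀ i, 0 ≤ ptilde i := by
    intro i
    rw [hptilde i]
    by_cases h : i ∈ μ
    · simpa [h] using (hp i).1
    · simp [h]
  have hf' : ∀ x : ℝ, f x
      = (ρ * (List.finRange N).foldl (ZneAux.step Q ptilde x) O).trace := by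
    intro x
    rw [hf x]
    have : (List.finRange N).foldl (ZneAux.step Q p x) O
        = (List.finRange N).foldl (ZneAux.step Q ptilde x) O :=
      ZneAux.foldl_lightcone Q p ptilde μ hpq hq0 hswap x (List.finRange N) O hμ
    rw [← this]
    rfl
  -- coefficients
  set c : ℕ → ℂ := fun k =>
    (ρ * ZneAux.coeffs Q ptilde O (List.finRange N) k).trace with hc
  have hfx : ∀ x : ℝ, f x = ∑ k ∈ Finset.range (N+1), (x:ℂ)^k * c k := by
    intro x
    rw [hf' x, ZneAux.foldl_step_eq, List.length_finRange, Finset.mul_sum,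
      Matrix.trace_sum]
    refine Finset.sum_congr rfl fun k _ => ?_
    rw [Matrix.mul_smul, Matrix.trace_smul, smul_eq_mul, hc]
  have hc0 : c 0 = (ρ * O).trace := by
    rw [hc]; simp only [ZneAux.coeffs_zero]
  have hck : ∀ k, ‖c k‖
      ≤ 2^k * ∑ S ∈ Finset.univ.powersetCard k, ∏ i ∈ S, ptilde i := by
    intro k
    have h1 := ZneAux.trace_bound ρ (ZneAux.coeffs Q ptilde O (List.finRange N) k) hρ hρ_tr
    have h2 := ZneAux.coeffs_norm Q ptilde O hO hQn hq_nn (List.finRange N)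
      (List.nodup_finRange N) k
    rw [List.toFinset_finRange] at h2
    exact h1.trans h2
  have hrich : ∀ k ≤ K, (∑ ℓ, β ℓ * g ℓ ^ k) = if k = 0 then 1 else 0 :=
    fun k hk => ZneAux.richardson g hg_inj β hβ k hk
  -- main computation
  have hmain : (∑ ℓ, (β ℓ : ℂ) * f (g ℓ)) - (ρ * O).trace
      = ∑ k ∈ Finset.Icc (K+1) N, ((∑ ℓ, β ℓ * g ℓ ^ k : ℝ) : ℂ) * c k := by
    have e1 : ∑ ℓ, (β ℓ : ℂ) * f (g ℓ)
        = ∑ k ∈ Finset.range (N+1), ((∑ ℓ, β ℓ * g ℓ ^ k : ℝ) : ℂ) * c k := by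
      calc ∑ ℓ, (β ℓ : ℂ) * f (g ℓ)
          = ∑ ℓ, ∑ k ∈ Finset.range (N+1), (β ℓ:ℂ) * (((g ℓ : ℝ):ℂ)^k * c k) := by
            refine Finset.sum_congr rfl fun ℓ _ => ?_
            rw [hfx (g ℓ), Finset.mul_sum]
        _ = ∑ k ∈ Finset.range (N+1), ∑ ℓ, (β ℓ:ℂ) * (((g ℓ : ℝ):ℂ)^k * c k) :=
            Finset.sum_comm
        _ = ∑ k ∈ Finset.range (N+1), ((∑ ℓ, β ℓ * g ℓ ^ k : ℝ) : ℂ) * c k := by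
            refine Finset.sum_congr rfl fun k _ => ?_
            push_cast
            rw [Finset.sum_mul]
            exact Finset.sum_congr rfl fun ℓ _ => by ring
    rw [e1, Finset.range_eq_Ico,
      ← Finset.sum_Ico_consecutive _ (by omega : 0 ≤ K+1) (by omega : K+1 ≤ N+1)]
    have hfirst : ∑ k ∈ Finset.Ico 0 (K+1), ((∑ ℓ, β ℓ * g ℓ ^ k : ℝ) : ℂ) * c k
        = c 0 := by
      rw [← Finset.range_eq_Ico]
      rw [Finset.sum_eq_single 0]
      · rw [hrich 0 (by omega)]; simp
      · intro k hk hk0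
        rw [hrich k (by have := Finset.mem_range.mp hk; omega), if_neg hk0]
        simp
      · intro h; exact absurd (Finset.mem_range.mpr (by omega)) h
    rw [hfirst, Finset.Ico_add_one_right_eq_Icc, hc0]
    ring
  rw [hmain]
  calc ‖∑ k ∈ Finset.Icc (K+1) N, ((∑ ℓ, β ℓ * g ℓ ^ k : ℝ) : ℂ) * c k‖
      ≤ ∑ k ∈ Finset.Icc (K+1) N,
          ‖((∑ ℓ, β ℓ * g ℓ ^ k : ℝ) : ℂ) * c k‖ := norm_sum_le _ _
    _ ≤ ∑ k ∈ Finset.Icc (K+1) N,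
          2 ^ k * |∑ ℓ, β ℓ * g ℓ ^ k| *
            ∑ S ∈ Finset.univ.powersetCard k, ∏ i ∈ S, ptilde i := by
        refine Finset.sum_le_sum fun k _ => ?_
        rw [norm_mul, Complex.norm_real, Real.norm_eq_abs]
        calc |∑ ℓ, β ℓ * g ℓ ^ k| * ‖c k‖
            ≤ |∑ ℓ, β ℓ * g ℓ ^ k|
              * (2^k * ∑ S ∈ Finset.univ.powersetCard k, ∏ i ∈ S, ptilde i) :=
              mul_le_mul_of_nonneg_left (hck k) (abs_nonneg _)
          _ = 2 ^ k * |∑ ℓ, β ℓ * g ℓ ^ k| *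
              ∑ S ∈ Finset.univ.powersetCard k, ∏ i ∈ S, ptilde i := by ring
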